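/- Let (R, Y, X, Ŷ) satisfy P(R=1 | Y, Ŷ, X) = π₀(X) with π₀(X) ∈ (0,1) a.s., let π = P(R=1), and w₀(x) = (π/(1−π))·(1−π₀(x))/π₀(x). Let s(Y,X) be integrable ℝᵈ-valued, m̃₀(x,ŷ) = E[s|X=x,Ŷ=ŷ], m₀(x) = E[s|X=x]. Then the influence-type function φ = (R/π)·w₀(X)·(s(Y,X) − m̃₀(X,Ŷ)) + (w₀(X)/(π + (1−π)w₀(X)))·(m̃₀(X,Ŷ) − m₀(X)) + ((1−R)/(1−π))·m₀(X) satisfies E[φ] = E_q[s(Y,X)], where E_q denotes expectation in the unlabeled (R=0) population. -/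

import Mathlib

open MeasureTheory

theorem stmt_8 {Ω : Type*} [MeasurableSpace Ω] (μ : Measure Ω) [IsProbabilityMeasure μ]
    {d : ℕ} (R Y X Yh : Ω → ℝ)
    (hR : Measurable R) (hY : Measurable Y) (hX : Measurable X) (hYh : Measurable Yh)
    (hRbin : ∀ ω, R ω = 0 ∨ R ω = 1)
    (p0 : ℝ → ℝ) (hp0 : Measurable p0) (hp0mem : ∀ x, p0 x ∈ Set.Ioo (0:ℝ) 1)
    (pl : ℝ) (hpl : pl = (μ {ω | R ω = 1}).toReal) (hplmem : pl ∈ Set.Ioo (0:ℝ) 1)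
    (w0 : ℝ → ℝ) (hw0 : ∀ x, w0 x = (pl / (1 - pl)) * ((1 - p0 x) / p0 x))
    (hMAR : μ[R | MeasurableSpace.comap (fun ω => (Y ω, Yh ω, X ω)) inferInstance]
      =ᵐ[μ] fun ω => p0 (X ω))
    (s0 : ℝ → ℝ → Fin d → ℝ) (hs0 : Measurable (Function.uncurry s0))
    (s mt m0 : Ω → Fin d → ℝ) (hs : s = fun ω => s0 (Y ω) (X ω))
    (hsInt : Integrable s μ)
    (hmt : mt =ᵐ[μ] μ[s | MeasurableSpace.comap (fun ω => (X ω, Yh ω)) inferInstance])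
    (hm0 : m0 =ᵐ[μ] μ[s | MeasurableSpace.comap X inferInstance])
    (hmtInt : Integrable mt μ) (hm0Int : Integrable m0 μ)
    (hws : Integrable (fun ω => w0 (X ω) • s ω) μ)
    (hwmt : Integrable (fun ω => w0 (X ω) • mt ω) μ)
    (φ : Ω → Fin d → ℝ)
    (hφ : φ = fun ω => (R ω / pl) • (w0 (X ω) • (s ω - mt ω))
        + (w0 (X ω) / (pl + (1 - pl) * w0 (X ω))) • (mt ω - m0 ω)
        + ((1 - R ω) / (1 - pl)) • m0 ω)
    (hφInt : Integrable φ μ) :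
    ∫ ω, φ ω ∂μ = (1 - pl)⁻¹ • ∫ ω, (1 - R ω) • s ω ∂μ := by
  obtain ⟨hpl0, hpl1⟩ := hplmem
  have h1pl : (0:ℝ) < 1 - pl := by linarith
  -- boundedness of R
  have hRb : ∀ ω, ‖R ω‖ ≤ 1 := fun ω => by rcases hRbin ω with h | h <;> simp [h]
  have hRi : Integrable R μ :=
    (integrable_const (1:ℝ)).mono' hR.aestronglyMeasurable (ae_of_all _ hRb)
  have bint : ∀ (b : Ω → ℝ) (C : ℝ), AEStronglyMeasurable b μ → (∀ ω, ‖b ω‖ ≤ C) →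
      ∀ (g : Ω → ℝ), Integrable g μ → Integrable (fun ω => b ω * g ω) μ :=
    fun b C hb hbC g hg => hg.bdd_mul hb (ae_of_all _ hbC)
  have hw0meas : Measurable w0 := by
    have : w0 = fun x => (pl / (1 - pl)) * ((1 - p0 x) / p0 x) := funext hw0
    rw [this]
    exact measurable_const.mul ((measurable_const.sub hp0).div hp0)
  -- the two conditional expectations as honest functions
  set mtC : Ω → Fin d → ℝ :=
    μ[s | MeasurableSpace.comap (fun ω => (X ω, Yh ω)) inferInstance] with hmtC
  set m0C : Ω → Fin d → ℝ := μ[s | MeasurableSpace.comap X inferInstance] with hm0C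
  have hmtCInt : Integrable mtC μ := integrable_condExp
  have hm0CInt : Integrable m0C μ := integrable_condExp
  have projInt : ∀ (f : Ω → Fin d → ℝ), Integrable f μ → ∀ j : Fin d,
      Integrable (fun ω => f ω j) μ :=
    fun f hf j =>
      (ContinuousLinearMap.proj (R := ℝ) (φ := fun _ : Fin d => ℝ) j).integrable_comp hf
  have hwmtC : Integrable (fun ω => w0 (X ω) • mtC ω) μ :=
    hwmt.congr (by filter_upwards [hmt] with ω hω; rw [hω])
  have haInt : ∀ j : Fin d, Integrable (fun ω => w0 (X ω) * (s ω j - mtC ω j)) μ := by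
    intro j
    exact ((projInt _ hws j).sub (projInt _ hwmtC j)).congr (ae_of_all _ fun ω => by
      simp only [Pi.sub_apply, Pi.smul_apply, smul_eq_mul]; ring)
  -- === part depending on the sigma-algebra m ===
  have hmle0 : MeasurableSpace.comap (fun ω => (Y ω, Yh ω, X ω)) inferInstance
      ≤ ‹MeasurableSpace Ω› := (hY.prodMk (hYh.prodMk hX)).comap_le
  set m : MeasurableSpace Ω := MeasurableSpace.comap (fun ω => (Y ω, Yh ω, X ω)) inferInstance
    with hmdef
  have hmle : m ≤ _ := hmle0
  haveI hsf : SigmaFinite (μ.trim hmle) := inferInstance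
  have htriple : Measurable[m] (fun ω => (Y ω, Yh ω, X ω)) := Measurable.of_comap_le le_rfl
  have hYm : Measurable[m] Y := measurable_fst.comp htriple
  have hYhm : Measurable[m] Yh := (measurable_fst.comp measurable_snd).comp htriple
  have hXm : Measurable[m] X := (measurable_snd.comp measurable_snd).comp htriple
  have hm2le : MeasurableSpace.comap (fun ω => (X ω, Yh ω)) inferInstance ≤ m :=
    (hXm.prodMk hYhm).comap_le
  have hm1le : MeasurableSpace.comap X inferInstance ≤ m := hXm.comap_le
  have hsm : StronglyMeasurable[m] s := by
    rw [hs]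
    exact (hs0.comp (hYm.prodMk hXm)).stronglyMeasurable
  have hw0Xm : Measurable[m] (fun ω => w0 (X ω)) := hw0meas.comp hXm
  have key : ∀ g : Ω → ℝ, StronglyMeasurable[m] g → Integrable g μ →
      ∫ ω, R ω * g ω ∂μ = ∫ ω, p0 (X ω) * g ω ∂μ := by
    intro g hgm hgi
    have hgRi : Integrable (g * R) μ := by
      have := bint R 1 hR.aestronglyMeasurable hRb g hgi
      exact this.congr (ae_of_all _ fun ω => by simp [mul_comm])
    have h1 : μ[g * R|m] =ᵐ[μ] g * μ[R|m] :=
      condExp_mul_of_stronglyMeasurable_left hgm hgRi hRi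
    calc ∫ ω, R ω * g ω ∂μ = ∫ ω, (g * R) ω ∂μ := by
          simp only [Pi.mul_apply, mul_comm]
      _ = ∫ ω, (μ[g * R|m]) ω ∂μ := (integral_condExp hmle).symm
      _ = ∫ ω, g ω * p0 (X ω) ∂μ := by
          refine integral_congr_ae ?_
          filter_upwards [h1, hMAR] with ω h1ω h2ω
          rw [h1ω, Pi.mul_apply, h2ω]
      _ = ∫ ω, p0 (X ω) * g ω ∂μ := by simp only [mul_comm]
  have hsim : ∀ j : Fin d, StronglyMeasurable[m] (fun ω => s ω j) :=
    fun j => (continuous_apply j).comp_stronglyMeasurable hsm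
  have htim : ∀ j : Fin d, StronglyMeasurable[m] (fun ω => mtC ω j) :=
    fun j => (continuous_apply j).comp_stronglyMeasurable (stronglyMeasurable_condExp.mono hm2le)
  have hmim : ∀ j : Fin d, StronglyMeasurable[m] (fun ω => m0C ω j) :=
    fun j => (continuous_apply j).comp_stronglyMeasurable (stronglyMeasurable_condExp.mono hm1le)
  have keyA : ∀ j : Fin d, ∫ ω, R ω * (w0 (X ω) * (s ω j - mtC ω j)) ∂μ
      = ∫ ω, p0 (X ω) * (w0 (X ω) * (s ω j - mtC ω j)) ∂μ :=
    fun j => key _ (hw0Xm.stronglyMeasurable.mul ((hsim j).sub (htim j))) (haInt j)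
  have keyB : ∀ j : Fin d, ∫ ω, R ω * m0C ω j ∂μ = ∫ ω, p0 (X ω) * m0C ω j ∂μ :=
    fun j => key _ (hmim j) (projInt _ hm0CInt j)
  have keyC : ∀ j : Fin d, ∫ ω, R ω * s ω j ∂μ = ∫ ω, p0 (X ω) * s ω j ∂μ :=
    fun j => key _ (hsim j) (projInt _ hsInt j)
  -- drop everything mentioning m
  clear key hsim htim hmim hsm hw0Xm hm2le hm1le htriple hYm hYhm hXm hsf hmle hmle0 hMAR hmdef
  clear m
  -- === componentwise computation ===
  subst hφ
  funext i
  have piApply : ∀ (f : Ω → Fin d → ℝ), Integrable f μ → ∀ j : Fin d,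
      (∫ ω, f ω ∂μ) j = ∫ ω, f ω j ∂μ := by
    intro f hf j
    exact ((ContinuousLinearMap.proj (R := ℝ) (φ := fun _ : Fin d => ℝ) j).integral_comp_comm
      hf).symm
  have hRs : Integrable (fun ω => (1 - R ω) • s ω) μ := by
    have hb : MemLp (fun ω => 1 - R ω) ⊤ μ := by
      refine memLp_top_of_bound (measurable_const.sub hR).aestronglyMeasurable 2
        (ae_of_all _ fun ω => ?_)
      have := hRb ω
      rw [Real.norm_eq_abs] at this ⊢
      cases abs_cases (R ω) <;> cases abs_cases (1 - R ω) <;> linarith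
    exact (hsInt.smul_of_top_right hb).congr (ae_of_all _ fun ω => rfl)
  rw [piApply _ hφInt i, Pi.smul_apply, piApply _ hRs i, smul_eq_mul]
  -- pointwise algebra facts
  have hp0ne : ∀ x, p0 x ≠ 0 := fun x => (hp0mem x).1.ne'
  have hpw : ∀ x z, p0 x * (w0 x * z) = (pl / (1 - pl)) * ((1 - p0 x) * z) := by
    intro x z
    have h1 : p0 x ≠ 0 := hp0ne x
    have h2 : (1:ℝ) - pl ≠ 0 := h1pl.ne'
    rw [hw0 x]
    field_simp
  have hc : ∀ x, w0 x / (pl + (1 - pl) * w0 x) = (1 - p0 x) / (1 - pl) := by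
    intro x
    have h0 := (hp0mem x).1
    have hden : pl + (1 - pl) * w0 x = pl / p0 x := by
      rw [hw0 x]; field_simp; ring
    have hdne : pl + (1 - pl) * w0 x ≠ 0 := by
      rw [hden]; positivity
    have h1 : p0 x ≠ 0 := h0.ne'
    have h2 : (1:ℝ) - pl ≠ 0 := h1pl.ne'
    rw [div_eq_div_iff hdne h1pl.ne', hw0 x]
    field_simp
    ring
  have hp0X : ∀ ω, ‖1 - p0 (X ω)‖ ≤ 1 := fun ω => by
    have h := hp0mem (X ω)
    rw [Real.norm_eq_abs, abs_le]
    exact ⟨by linarith [h.2], by linarith [h.1]⟩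
  have hp0Xb : ∀ ω, ‖p0 (X ω)‖ ≤ 1 := fun ω => by
    have h := hp0mem (X ω)
    rw [Real.norm_eq_abs, abs_le]
    exact ⟨by linarith [h.1], by linarith [h.2]⟩
  have hp0Xa : AEStronglyMeasurable (fun ω => 1 - p0 (X ω)) μ :=
    (measurable_const.sub (hp0.comp hX)).aestronglyMeasurable
  have hp0Xa' : AEStronglyMeasurable (fun ω => p0 (X ω)) μ :=
    (hp0.comp hX).aestronglyMeasurable
  have hRa : AEStronglyMeasurable R μ := hR.aestronglyMeasurable
  have h1Rb : ∀ ω, ‖1 - R ω‖ ≤ 1 := fun ω => by rcases hRbin ω with h | h <;> simp [h]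
  have h1Ra : AEStronglyMeasurable (fun ω => 1 - R ω) μ :=
    (measurable_const.sub hR).aestronglyMeasurable
  -- decompose the LHS integrand (a.e.)
  have hLHS : ∫ ω, ((R ω / pl) • (w0 (X ω) • (s ω - mt ω))
        + (w0 (X ω) / (pl + (1 - pl) * w0 (X ω))) • (mt ω - m0 ω)
        + ((1 - R ω) / (1 - pl)) • m0 ω) i ∂μ
      = ∫ ω, (pl⁻¹ * (R ω * (w0 (X ω) * (s ω i - mtC ω i)))
        + (1 - pl)⁻¹ * ((1 - p0 (X ω)) * (mtC ω i - m0C ω i))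
        + (1 - pl)⁻¹ * ((1 - R ω) * m0C ω i)) ∂μ := by
    refine integral_congr_ae ?_
    filter_upwards [hmt, hm0] with ω h1 h2
    simp only [Pi.add_apply, Pi.smul_apply, Pi.sub_apply, smul_eq_mul, h1, h2]
    rw [hc (X ω)]
    have h3 : pl ≠ 0 := hpl0.ne'
    have h4 : (1:ℝ) - pl ≠ 0 := h1pl.ne'
    field_simp
  have I1 : Integrable (fun ω => pl⁻¹ * (R ω * (w0 (X ω) * (s ω i - mtC ω i)))) μ :=
    (bint R 1 hRa hRb _ (haInt i)).const_mul _
  have I2 : Integrable (fun ω => (1 - pl)⁻¹ * ((1 - p0 (X ω)) * (mtC ω i - m0C ω i))) μ :=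
    (bint _ 1 hp0Xa hp0X _ ((projInt _ hmtCInt i).sub (projInt _ hm0CInt i))).const_mul _
  have I3 : Integrable (fun ω => (1 - pl)⁻¹ * ((1 - R ω) * m0C ω i)) μ :=
    (bint _ 1 h1Ra h1Rb _ (projInt _ hm0CInt i)).const_mul _
  have I12 : Integrable (fun ω => pl⁻¹ * (R ω * (w0 (X ω) * (s ω i - mtC ω i)))
      + (1 - pl)⁻¹ * ((1 - p0 (X ω)) * (mtC ω i - m0C ω i))) μ := I1.add I2
  rw [hLHS, integral_add I12 I3, integral_add I1 I2,
    integral_const_mul, integral_const_mul, integral_const_mul, keyA i]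
  have e1 : ∫ ω, p0 (X ω) * (w0 (X ω) * (s ω i - mtC ω i)) ∂μ
      = (pl / (1 - pl)) * ∫ ω, (1 - p0 (X ω)) * (s ω i - mtC ω i) ∂μ := by
    rw [← integral_const_mul]
    exact integral_congr_ae (ae_of_all _ fun ω => hpw (X ω) _)
  have e3 : ∫ ω, (1 - R ω) * m0C ω i ∂μ = ∫ ω, (1 - p0 (X ω)) * m0C ω i ∂μ := by
    have h1 : Integrable (fun ω => R ω * m0C ω i) μ := bint R 1 hRa hRb _ (projInt _ hm0CInt i)
    have h2 : Integrable (fun ω => p0 (X ω) * m0C ω i) μ :=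
      bint _ 1 hp0Xa' hp0Xb _ (projInt _ hm0CInt i)
    calc ∫ ω, (1 - R ω) * m0C ω i ∂μ = ∫ ω, (m0C ω i - R ω * m0C ω i) ∂μ :=
          integral_congr_ae (ae_of_all _ fun ω => by ring)
      _ = ∫ ω, m0C ω i ∂μ - ∫ ω, R ω * m0C ω i ∂μ := integral_sub (projInt _ hm0CInt i) h1
      _ = ∫ ω, m0C ω i ∂μ - ∫ ω, p0 (X ω) * m0C ω i ∂μ := by rw [keyB i]
      _ = ∫ ω, (m0C ω i - p0 (X ω) * m0C ω i) ∂μ := (integral_sub (projInt _ hm0CInt i) h2).symm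
      _ = ∫ ω, (1 - p0 (X ω)) * m0C ω i ∂μ := integral_congr_ae (ae_of_all _ fun ω => by ring)
  have eR : ∫ ω, (1 - R ω) * s ω i ∂μ = ∫ ω, (1 - p0 (X ω)) * s ω i ∂μ := by
    have h1 : Integrable (fun ω => R ω * s ω i) μ := bint R 1 hRa hRb _ (projInt _ hsInt i)
    have h2 : Integrable (fun ω => p0 (X ω) * s ω i) μ :=
      bint _ 1 hp0Xa' hp0Xb _ (projInt _ hsInt i)
    calc ∫ ω, (1 - R ω) * s ω i ∂μ = ∫ ω, (s ω i - R ω * s ω i) ∂μ :=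
          integral_congr_ae (ae_of_all _ fun ω => by ring)
      _ = ∫ ω, s ω i ∂μ - ∫ ω, R ω * s ω i ∂μ := integral_sub (projInt _ hsInt i) h1
      _ = ∫ ω, s ω i ∂μ - ∫ ω, p0 (X ω) * s ω i ∂μ := by rw [keyC i]
      _ = ∫ ω, (s ω i - p0 (X ω) * s ω i) ∂μ := (integral_sub (projInt _ hsInt i) h2).symm
      _ = ∫ ω, (1 - p0 (X ω)) * s ω i ∂μ := integral_congr_ae (ae_of_all _ fun ω => by ring)
  have hRsi : ∫ ω, ((1 - R ω) • s ω) i ∂μ = ∫ ω, (1 - R ω) * s ω i ∂μ :=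
    integral_congr_ae (ae_of_all _ fun ω => by simp)
  rw [hRsi, eR, e1, e3]
  have J1 : Integrable (fun ω => (1 - p0 (X ω)) * (s ω i - mtC ω i)) μ :=
    bint _ 1 hp0Xa hp0X _ ((projInt _ hsInt i).sub (projInt _ hmtCInt i))
  have J2 : Integrable (fun ω => (1 - p0 (X ω)) * (mtC ω i - m0C ω i)) μ :=
    bint _ 1 hp0Xa hp0X _ ((projInt _ hmtCInt i).sub (projInt _ hm0CInt i))
  have J3 : Integrable (fun ω => (1 - p0 (X ω)) * m0C ω i) μ :=
    bint _ 1 hp0Xa hp0X _ (projInt _ hm0CInt i)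
  have hsum : ∫ ω, (1 - p0 (X ω)) * (s ω i - mtC ω i) ∂μ
      + ∫ ω, (1 - p0 (X ω)) * (mtC ω i - m0C ω i) ∂μ
      + ∫ ω, (1 - p0 (X ω)) * m0C ω i ∂μ = ∫ ω, (1 - p0 (X ω)) * s ω i ∂μ := by
    have J12 : Integrable (fun ω => (1 - p0 (X ω)) * (s ω i - mtC ω i)
        + (1 - p0 (X ω)) * (mtC ω i - m0C ω i)) μ := J1.add J2
    rw [← integral_add J1 J2, ← integral_add J12 J3]
    exact integral_congr_ae (ae_of_all _ fun ω => by ring)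
  have hplne : pl ≠ 0 := hpl0.ne'
  have h1plne : (1 - pl) ≠ 0 := h1pl.ne'
  field_simp
  linarith [hsum]
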